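/- Let X ⊆ I^{ω₁} be Lindelöf, K ⊆ I^{ω₁} be compact, and Λ ⊆ ω₁ be unbounded, such that p_α[K] ⊆ p_α[X] for all α ∈ Λ, where p_α is the projection to I^α. Then K ⊆ X. -/

import Mathlib

open Set

/-- The ordinal `ω₁` as a (linearly ordered) type. -/
noncomputable abbrev Omega1 : Type := (Cardinal.aleph 1).ord.ToType

lemma countable_bounded_omega1 (S : Set Omega1) (hS : S.Countable) :
    ∃ b : Omega1, ∀ a ∈ S, a < b := by
  by_contra hcon
  push_neg at hcon
  have hcof : IsCofinal S := fun x => hcon x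
  have h1 := Order.cof_le hcof
  rw [Ordinal.cof_toType] at h1
  have : Cardinal.mk S < ((Cardinal.aleph 1).ord).cof :=
    calc Cardinal.mk S ≤ Cardinal.aleph0 := Cardinal.mk_le_aleph0_iff.2 hS
      _ < Cardinal.aleph 1 := Cardinal.aleph0_lt_aleph_one
      _ ≤ ((Cardinal.aleph 1).ord).cof := Cardinal.isRegular_aleph_one.2
  exact absurd h1 (not_le.2 this)

theorem stmt17 (X K : Set (Omega1 → unitInterval))
    (hX : IsLindelof X) (hK : IsCompact K)
    (Λ : Set Omega1) (hunb : ∀ α : Omega1, ∃ β ∈ Λ, α < β)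
    (hproj : ∀ α ∈ Λ, ∀ k ∈ K, ∃ x ∈ X, ∀ i, i < α → x i = k i) :
    K ⊆ X := by
  intro k hk
  by_contra hkX
  set U : Omega1 → Set (Omega1 → unitInterval) := fun α => {a | a α ≠ k α} with hU
  have hUo : ∀ α, IsOpen (U α) := fun α =>
    show IsOpen ((fun a : Omega1 → unitInterval => a α) ⁻¹' {y | y ≠ k α}) from
      isOpen_ne.preimage (continuous_apply α)
  have hcov : X ⊆ ⋃ α, U α := by
    intro x hx
    by_contra hxc
    simp only [mem_iUnion, not_exists, hU, mem_setOf_eq, not_not] at hxc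
    exact hkX (by rwa [funext hxc] at hx)
  obtain ⟨u, hu_count, hu_cov⟩ := hX.elim_countable_subcover U hUo hcov
  obtain ⟨b, hb⟩ := countable_bounded_omega1 u hu_count
  obtain ⟨β, hβΛ, hbβ⟩ := hunb b
  obtain ⟨x, hxX, hxk⟩ := hproj β hβΛ k hk
  obtain ⟨α, hαu, hαx⟩ := by simpa using hu_cov hxX
  exact hαx (hxk α ((hb α hαu).trans hbβ))
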